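/- Let H be a real Hilbert space, let T, A : H → H be bounded linear operators, and let x₀, x̄₀ ∈ H. Suppose x, x̄ : [0,∞) → H are differentiable functions such that T ẋ(t) = A x(t) and T* ẋ̄(t) = A* x̄(t) for all t ≥ 0, with T x(0) = T x₀ and T* x̄(0) = T* x̄₀. Then for all t ≥ 0, ⟨T* x̄₀, x(t)⟩ = ⟨x̄(t), T x₀⟩. (Theorem 1, intertwining relation between a PIE and its dual PIE.) -/

import Mathlib

open scoped RealInnerProductSpace

/-- **Theorem 1 (intertwining relation between a PIE and its dual PIE).**
If `x` solves the PIE `Σ(T,A)` with `T x(0) = T x₀` and `x̄` solves the dual PIE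
`Σ(T*,A*)` with `T* x̄(0) = T* x̄₀`, then `⟪T* x̄₀, x t⟫ = ⟪x̄ t, T x₀⟫` for all `t ≥ 0`. -/
theorem pie_dual_intertwining
    {H : Type*} [NormedAddCommGroup H] [InnerProductSpace ℝ H] [CompleteSpace H]
    (T A : H →L[ℝ] H) (x₀ xb₀ : H)
    (x xb x' xb' : ℝ → H)
    (hx : ∀ t : ℝ, 0 ≤ t → HasDerivAt x (x' t) t)
    (hxb : ∀ t : ℝ, 0 ≤ t → HasDerivAt xb (xb' t) t)
    (hxeq : ∀ t : ℝ, 0 ≤ t → T (x' t) = A (x t))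
    (hxbeq : ∀ t : ℝ, 0 ≤ t →
      ContinuousLinearMap.adjoint T (xb' t) = ContinuousLinearMap.adjoint A (xb t))
    (hx0 : T (x 0) = T x₀)
    (hxb0 : ContinuousLinearMap.adjoint T (xb 0) = ContinuousLinearMap.adjoint T xb₀) :
    ∀ t : ℝ, 0 ≤ t →
      ⟪ContinuousLinearMap.adjoint T xb₀, x t⟫ = ⟪xb t, T x₀⟫ := by
  intro t ht
  set g : ℝ → ℝ := fun s => ⟪xb (t - s), T (x s)⟫ with hg
  -- derivative of g is zero on [0,t]
  have hderiv : ∀ s ∈ Set.Icc (0:ℝ) t, HasDerivAt g 0 s := by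
    intro s hs
    have hs0 : 0 ≤ s := hs.1
    have hts : 0 ≤ t - s := sub_nonneg.2 hs.2
    have h1 : HasDerivAt (fun s => xb (t - s)) (-xb' (t - s)) s := by
      have := (hxb (t - s) hts).scomp s (((hasDerivAt_id s).const_sub t))
      simp at this
      exact this
    have h2 : HasDerivAt (fun s => T (x s)) (T (x' s)) s :=
      (T.hasFDerivAt.comp_hasDerivAt s (hx s hs0))
    have h := h1.inner ℝ h2
    have hval : ⟪xb (t - s), T (x' s)⟫ + ⟪-xb' (t - s), T (x s)⟫ = 0 := by
      have e1 : ⟪xb' (t - s), T (x s)⟫ = ⟪xb (t - s), A (x s)⟫ := by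
        calc ⟪xb' (t - s), T (x s)⟫ = ⟪ContinuousLinearMap.adjoint T (xb' (t - s)), x s⟫ := by
              rw [ContinuousLinearMap.adjoint_inner_left]
          _ = ⟪ContinuousLinearMap.adjoint A (xb (t - s)), x s⟫ := by rw [hxbeq _ hts]
          _ = ⟪xb (t - s), A (x s)⟫ := by rw [ContinuousLinearMap.adjoint_inner_left]
      rw [hxeq s hs0, inner_neg_left, e1]
      ring
    rw [hval] at h
    exact h
  have hcont : ContinuousOn g (Set.Icc 0 t) := fun s hs => ((hderiv s hs).continuousAt).continuousWithinAt
  have := constant_of_has_deriv_right_zero hcont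
    (fun s hs => ((hderiv s (Set.mem_Icc_of_Ico hs)).hasDerivWithinAt))
    t (Set.right_mem_Icc.2 ht)
  -- g t = g 0
  have hg0 : g 0 = ⟪xb t, T x₀⟫ := by simp [hg, hx0]
  have hgt : g t = ⟪ContinuousLinearMap.adjoint T xb₀, x t⟫ := by
    simp only [hg, sub_self]
    rw [real_inner_comm, ← ContinuousLinearMap.adjoint_inner_right, hxb0, real_inner_comm]
  rw [← hgt, this, hg0]
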